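/- For genus 7: the Porteous class computation in the cohomology ring H = Q[h,b]/(b^2 + 8bh^3 + 8h^6, 6h^5b + 7h^8). With c_t(B*) = 1 - 2ht + 2h^2t^2 + bt^3 + (-2h^4 - 2hb)t^4 and a(t) = (1+ht)^7·c_t(B*), one has a_3 = b + 7h^3, a_4 = 5bh + 5h^4, a_5 = 7bh^2 + 7h^5, and the 2×2 determinant a_4^2 - a_3·a_5 = 7h^8 in H. -/

import Mathlib

open Polynomial

noncomputable section

/-- `h` in `ℚ[h,b]`. -/
noncomputable def hPoly : MvPolynomial (Fin 2) ℚ := MvPolynomial.X 0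

/-- `b` in `ℚ[h,b]`. -/
noncomputable def bPoly : MvPolynomial (Fin 2) ℚ := MvPolynomial.X 1

/-- The cohomology ring `H = ℚ[h,b]/(b² + 8bh³ + 8h⁶, 6h⁵b + 7h⁸)` of the
10-dimensional spinor variety (Ranestad–Schreyer). -/
noncomputable def SpinorCohRing : Type :=
  MvPolynomial (Fin 2) ℚ ⧸
    Ideal.span {bPoly ^ 2 + 8 * bPoly * hPoly ^ 3 + 8 * hPoly ^ 6,
      6 * hPoly ^ 5 * bPoly + 7 * hPoly ^ 8}

noncomputable instance : CommRing SpinorCohRing :=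
  inferInstanceAs (CommRing (MvPolynomial (Fin 2) ℚ ⧸ Ideal.span _))

/-- The class of `h` in `H`. -/
noncomputable def hCl : SpinorCohRing := Ideal.Quotient.mk _ hPoly

/-- The class of `b` in `H`. -/
noncomputable def bCl : SpinorCohRing := Ideal.Quotient.mk _ bPoly

/-- `c_t(B*) = 1 - 2ht + 2h²t² + bt³ + (-2h⁴ - 2hb)t⁴ ∈ H[t]`. -/
noncomputable def chernBStar : Polynomial SpinorCohRing :=
  C 1 - C (2 * hCl) * X + C (2 * hCl ^ 2) * X ^ 2 + C bCl * X ^ 3 +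
    C (-2 * hCl ^ 4 - 2 * hCl * bCl) * X ^ 4

/-- `a(t) = (1 + ht)^7 · c_t(B*) ∈ H[t]`. -/
noncomputable def aSeries : Polynomial SpinorCohRing :=
  (C 1 + C hCl * X) ^ 7 * chernBStar

set_option synthInstance.maxHeartbeats 1000000 in
lemma rel1 : bCl ^ 2 + 8 * bCl * hCl ^ 3 + 8 * hCl ^ 6 = 0 := by
  have : (Ideal.Quotient.mk (Ideal.span {bPoly ^ 2 + 8 * bPoly * hPoly ^ 3 + 8 * hPoly ^ 6,
      6 * hPoly ^ 5 * bPoly + 7 * hPoly ^ 8}))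
      (bPoly ^ 2 + 8 * bPoly * hPoly ^ 3 + 8 * hPoly ^ 6) = 0 := by
    rw [Ideal.Quotient.eq_zero_iff_mem]
    exact Ideal.subset_span (by simp)
  simp only [map_add, map_mul, map_pow, map_ofNat] at this
  exact this

set_option synthInstance.maxHeartbeats 1000000 in
lemma rel2 : 6 * hCl ^ 5 * bCl + 7 * hCl ^ 8 = 0 := by
  have : (Ideal.Quotient.mk (Ideal.span {bPoly ^ 2 + 8 * bPoly * hPoly ^ 3 + 8 * hPoly ^ 6,
      6 * hPoly ^ 5 * bPoly + 7 * hPoly ^ 8}))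
      (6 * hPoly ^ 5 * bPoly + 7 * hPoly ^ 8) = 0 := by
    rw [Ideal.Quotient.eq_zero_iff_mem]
    exact Ideal.subset_span (by simp)
  simp only [map_add, map_mul, map_pow, map_ofNat] at this
  exact this

lemma aSeries_eq : aSeries =
    C 1 + C (5 * hCl) * X + C (9 * hCl ^ 2) * X ^ 2
      + C (bCl + 7 * hCl ^ 3) * X ^ 3
      + C (5 * bCl * hCl + 5 * hCl ^ 4) * X ^ 4
      + C (7 * bCl * hCl ^ 2 + 7 * hCl ^ 5) * X ^ 5
      + C (-7 * bCl * hCl ^ 3 - 7 * hCl ^ 6) * X ^ 6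
      + C (-35 * bCl * hCl ^ 4 - 41 * hCl ^ 7) * X ^ 7
      + C (-49 * bCl * hCl ^ 5 - 58 * hCl ^ 8) * X ^ 8
      + C (-35 * bCl * hCl ^ 6 - 40 * hCl ^ 9) * X ^ 9
      + C (-13 * bCl * hCl ^ 7 - 14 * hCl ^ 10) * X ^ 10
      + C (-2 * bCl * hCl ^ 8 - 2 * hCl ^ 11) * X ^ 11 := by
  unfold aSeries chernBStar
  simp only [map_add, map_mul, map_pow, map_sub, map_neg, map_one, map_ofNat]
  ring

/-- **Porteous computation, genus 7.** In
`H = ℚ[h,b]/(b² + 8bh³ + 8h⁶, 6h⁵b + 7h⁸)`, with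
`a(t) = (1+ht)^7·c_t(B*)`, one has `a₃ = b + 7h³`, `a₄ = 5bh + 5h⁴`,
`a₅ = 7bh² + 7h⁵`, and the 2×2 Porteous determinant
`Δ_{4,2}(a) = a₄² - a₃a₅ = 7h⁸` in `H`. -/
theorem porteous_genus7 :
    aSeries.coeff 3 = bCl + 7 * hCl ^ 3 ∧
      aSeries.coeff 4 = 5 * bCl * hCl + 5 * hCl ^ 4 ∧
      aSeries.coeff 5 = 7 * bCl * hCl ^ 2 + 7 * hCl ^ 5 ∧
      aSeries.coeff 4 ^ 2 - aSeries.coeff 3 * aSeries.coeff 5 = 7 * hCl ^ 8 := by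
  have h3 : aSeries.coeff 3 = bCl + 7 * hCl ^ 3 := by
    rw [aSeries_eq]
    simp only [coeff_add, coeff_mul_X_pow', coeff_C, coeff_one]
    norm_num
  have h4 : aSeries.coeff 4 = 5 * bCl * hCl + 5 * hCl ^ 4 := by
    rw [aSeries_eq]
    simp only [coeff_add, coeff_mul_X_pow', coeff_C, coeff_one]
    norm_num
  have h5 : aSeries.coeff 5 = 7 * bCl * hCl ^ 2 + 7 * hCl ^ 5 := by
    rw [aSeries_eq]
    simp only [coeff_add, coeff_mul_X_pow', coeff_C, coeff_one]
    norm_num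
  refine ⟨h3, h4, h5, ?_⟩
  rw [h3, h4, h5]
  linear_combination (18 * hCl ^ 2) * rel1 + (-25 : SpinorCohRing) * rel2

end
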